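/- For the Gaussian linear model y ∼ N(Xβ, σ²Iₙ) with m-dimensional β, MLE β̂, and prior β ∼ N(β̂, n(XᵀX/σ²)⁻¹), the log predictive likelihood equals −(n/2)log(2πσ²) − (1/(2σ²))(y − ŷ)ᵀ(y − ŷ) − (m/2)log(n+1), where ŷ = Xβ̂ = X(XᵀX)⁻¹Xᵀy. -/

import Mathlib

open Matrix Real MeasureTheory

lemma std_gauss (k : ℕ) :
    ∫ x : Fin k → ℝ, exp (-(1/2) * (x ⬝ᵥ x)) = Real.sqrt ((2*π)^k) := by
  have h1 : ∀ x : Fin k → ℝ, exp (-(1/2) * (x ⬝ᵥ x)) = ∏ i, exp (-(1/2) * (x i)^2) := by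
    intro x
    rw [← Real.exp_sum]
    congr 1
    simp [dotProduct, Finset.mul_sum, sq]
  simp_rw [h1]
  rw [MeasureTheory.volume_pi, MeasureTheory.integral_fintype_prod_eq_pow (fun t : ℝ => exp (-(1/2) * t^2))]
  have : ∫ t : ℝ, exp (-(1/2) * t^2) = Real.sqrt (2*π) := by
    rw [integral_gaussian]
    rw [div_div_eq_mul_div, div_one, mul_comm]
  rw [this, Fintype.card_fin]
  rw [show ((2*π)^k : ℝ) = (Real.sqrt (2*π)^2)^k by rw [Real.sq_sqrt (by positivity)],
    ← pow_mul, mul_comm 2 k, pow_mul, Real.sqrt_sq (by positivity)]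

open scoped MatrixOrder in
lemma gauss_matrix {k : ℕ} (A : Matrix (Fin k) (Fin k) ℝ) (hA : A.PosDef) :
    ∫ x : Fin k → ℝ, exp (-(1/2) * (x ⬝ᵥ A *ᵥ x)) = Real.sqrt ((2*π)^k / A.det) := by
  set S := CFC.sqrt A with hSdef
  have hS : S * S = A := CFC.sqrt_mul_sqrt_self A hA.posSemidef.nonneg
  have hSsym : Sᵀ = S := by
    have := (CFC.sqrt_nonneg A).posSemidef.isHermitian
    simpa [Matrix.IsHermitian, Matrix.conjTranspose_eq_transpose_of_trivial, hSdef] using this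
  have hdetA : 0 < A.det := hA.det_pos
  have hdet2 : S.det ^ 2 = A.det := by rw [sq, ← Matrix.det_mul, hS]
  have hdetS_ne : S.det ≠ 0 := by
    intro h; rw [h] at hdet2; simp at hdet2; exact hdetA.ne' hdet2.symm
  have habs : |S.det| = Real.sqrt A.det := by
    rw [← hdet2, Real.sqrt_sq_eq_abs]
  have hquad : ∀ x : Fin k → ℝ, x ⬝ᵥ A *ᵥ x = (S *ᵥ x) ⬝ᵥ (S *ᵥ x) := by
    intro x
    rw [← hS, ← Matrix.mulVec_mulVec, Matrix.dotProduct_mulVec, ← Matrix.mulVec_transpose, hSsym]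
  have hmap := Real.map_matrix_volume_pi_eq_smul_volume_pi (ι := Fin k) hdetS_ne
  have hcont : Continuous fun x : Fin k → ℝ => exp (-(1/2) * (x ⬝ᵥ x)) := by
    continuity
  calc ∫ x : Fin k → ℝ, exp (-(1/2) * (x ⬝ᵥ A *ᵥ x))
      = ∫ x : Fin k → ℝ, exp (-(1/2) * ((Matrix.toLin' S x) ⬝ᵥ (Matrix.toLin' S x))) := by
        simp_rw [hquad, Matrix.toLin'_apply]
    _ = ∫ y : Fin k → ℝ, exp (-(1/2) * (y ⬝ᵥ y)) ∂(Measure.map (Matrix.toLin' S) volume) := by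
        rw [integral_map]
        · exact (Matrix.toLin' S).continuous_of_finiteDimensional.aemeasurable
        · exact hcont.aestronglyMeasurable
    _ = |S.det|⁻¹ * ∫ y : Fin k → ℝ, exp (-(1/2) * (y ⬝ᵥ y)) := by
        rw [hmap, integral_smul_measure, ENNReal.toReal_ofReal (abs_nonneg _), abs_inv,
          smul_eq_mul]
    _ = Real.sqrt ((2*π)^k / A.det) := by
        rw [std_gauss, habs, ← Real.sqrt_inv, ← Real.sqrt_mul (by positivity),
          inv_mul_eq_div]

lemma xtx_posdef {n m : ℕ} (X : Matrix (Fin n) (Fin m) ℝ) (hX : X.rank = m) :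
    (Xᵀ * X).PosDef := by
  have hker : ∀ v : Fin m → ℝ, X *ᵥ v = 0 → v = 0 := by
    have h1 : LinearMap.ker X.mulVecLin = ⊥ := by
      have h2 := X.mulVecLin.finrank_range_add_finrank_ker
      rw [show Module.finrank ℝ (LinearMap.range X.mulVecLin) = m from hX] at h2
      simp only [Module.finrank_pi, Fintype.card_fin] at h2
      have : Module.finrank ℝ (LinearMap.ker X.mulVecLin) = 0 := by omega
      exact Submodule.finrank_eq_zero.mp this
    intro v hv
    have : v ∈ LinearMap.ker X.mulVecLin := by simpa [Matrix.mulVecLin] using hv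
    simpa [h1] using this
  refine Matrix.PosDef.of_dotProduct_mulVec_pos
    (by simpa using Matrix.isHermitian_conjTranspose_mul_self X) fun x hx => ?_
  have h0 : X *ᵥ x ≠ 0 := fun h => hx (hker x h)
  have : star x ⬝ᵥ (Xᵀ * X) *ᵥ x = (X *ᵥ x) ⬝ᵥ (X *ᵥ x) := by
    rw [← Matrix.mulVec_mulVec, Matrix.dotProduct_mulVec, ← Matrix.mulVec_transpose]
    simp [Matrix.transpose_transpose]
  rw [this]
  have hnn : 0 ≤ (X *ᵥ x) ⬝ᵥ (X *ᵥ x) := Finset.sum_nonneg fun i _ => mul_self_nonneg _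
  rcases hnn.lt_or_eq with h | h
  · exact h
  · exact absurd (dotProduct_self_eq_zero.mp h.symm) h0

lemma posdef_smul {k : ℕ} {M : Matrix (Fin k) (Fin k) ℝ} (hM : M.PosDef) {c : ℝ} (hc : 0 < c) :
    (c • M).PosDef := by
  refine Matrix.PosDef.of_dotProduct_mulVec_pos ?_ fun x hx => ?_
  · have := hM.1
    simpa [Matrix.IsHermitian, Matrix.conjTranspose_eq_transpose_of_trivial] using
      congrArg (c • ·) (show Mᴴ = M from this)
  · rw [Matrix.smul_mulVec, dotProduct_smul, smul_eq_mul]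
    exact mul_pos hc (hM.dotProduct_mulVec_pos hx)

/-- For the Gaussian linear model y ∼ N(Xβ, σ²Iₙ) with MLE β̂ = (XᵀX)⁻¹Xᵀy and
prior β ∼ N(β̂, n(XᵀX/σ²)⁻¹), the log predictive likelihood equals
−(n/2)log(2πσ²) − (1/(2σ²))(y − ŷ)ᵀ(y − ŷ) − (m/2)log(n+1) with ŷ = Xβ̂. -/
theorem log_predictive_likelihood_gaussian_linear_model {n m : ℕ} (hn : 1 ≤ n)
    (X : Matrix (Fin n) (Fin m) ℝ) (hX : X.rank = m)
    (σ : ℝ) (hσ : 0 < σ) (y : Fin n → ℝ)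
    (βhat : Fin m → ℝ) (hβ : βhat = (Xᵀ * X)⁻¹ *ᵥ (Xᵀ *ᵥ y))
    (yhat : Fin n → ℝ) (hyhat : yhat = X *ᵥ βhat)
    (L : (Fin m → ℝ) → ℝ)
    (hL : ∀ β, L β = -((n : ℝ) / 2) * Real.log (2 * π * σ ^ 2)
      - (1 / (2 * σ ^ 2)) * ((y - X *ᵥ β) ⬝ᵥ (y - X *ᵥ β)))
    (J : Matrix (Fin m) (Fin m) ℝ) (hJ : J = (σ ^ 2)⁻¹ • (Xᵀ * X))
    (prior : (Fin m → ℝ) → ℝ)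
    (hprior : ∀ β, prior β =
      (Real.sqrt ((2 * π) ^ m * ((n : ℝ) • J⁻¹).det))⁻¹ *
        exp (-(1 / (2 * (n : ℝ))) * ((β - βhat) ⬝ᵥ (J *ᵥ (β - βhat))))) :
    Real.log (∫ β : Fin m → ℝ, exp (L β) * prior β)
      = -((n : ℝ) / 2) * Real.log (2 * π * σ ^ 2)
        - (1 / (2 * σ ^ 2)) * ((y - yhat) ⬝ᵥ (y - yhat))
        - ((m : ℝ) / 2) * Real.log ((n : ℝ) + 1) := by
  have hσ2 : (0:ℝ) < σ ^ 2 := by positivity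
  have hnR : (0:ℝ) < n := by exact_mod_cast hn
  -- positive definiteness
  have hXtX : (Xᵀ * X).PosDef := xtx_posdef X hX
  have hJpd : J.PosDef := hJ ▸ posdef_smul hXtX (by positivity)
  have hdetJ : 0 < J.det := hJpd.det_pos
  have hdetXtX : (Xᵀ * X).det ≠ 0 := hXtX.det_pos.ne'
  set A : Matrix (Fin m) (Fin m) ℝ := (((n:ℝ)+1)/n) • J with hAdef
  have hApd : A.PosDef := posdef_smul hJpd (by positivity)
  have hdetA : A.det = (((n:ℝ)+1)/n)^m * J.det := by
    rw [hAdef, Matrix.det_smul, Fintype.card_fin]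
  have hdetnJ : ((n : ℝ) • J⁻¹).det = (n:ℝ)^m * J.det⁻¹ := by
    rw [Matrix.det_smul, Fintype.card_fin, Matrix.det_nonsing_inv, Ring.inverse_eq_inv]
  set Z : ℝ := Real.sqrt ((2 * π) ^ m * ((n : ℝ) • J⁻¹).det) with hZdef
  have hZpos : 0 < Z := Real.sqrt_pos.mpr (by rw [hdetnJ]; positivity)
  -- normal equations
  have hnormal : (Xᵀ * X) *ᵥ βhat = Xᵀ *ᵥ y := by
    rw [hβ, Matrix.mulVec_mulVec, Matrix.mul_nonsing_inv _ hdetXtX.isUnit, Matrix.one_mulVec]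
  have horth : Xᵀ *ᵥ (y - yhat) = 0 := by
    rw [hyhat, Matrix.mulVec_sub, Matrix.mulVec_mulVec, hnormal, sub_self]
  -- quadratic decomposition
  set s : ℝ := (y - yhat) ⬝ᵥ (y - yhat) with hsdef
  have hdecomp : ∀ β : Fin m → ℝ, (y - X *ᵥ β) ⬝ᵥ (y - X *ᵥ β)
      = s + σ ^ 2 * ((β - βhat) ⬝ᵥ (J *ᵥ (β - βhat))) := by
    intro β
    have h1 : y - X *ᵥ β = (y - yhat) + X *ᵥ (βhat - β) := by
      rw [hyhat, Matrix.mulVec_sub]; abel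
    have hcross : (y - yhat) ⬝ᵥ (X *ᵥ (βhat - β)) = 0 := by
      rw [Matrix.dotProduct_mulVec, ← Matrix.mulVec_transpose, horth, zero_dotProduct]
    have hquad : (X *ᵥ (βhat - β)) ⬝ᵥ (X *ᵥ (βhat - β))
        = σ ^ 2 * ((β - βhat) ⬝ᵥ (J *ᵥ (β - βhat))) := by
      have e1 : (β - βhat) ⬝ᵥ (J *ᵥ (β - βhat))
          = (σ^2)⁻¹ * ((β - βhat) ⬝ᵥ ((Xᵀ * X) *ᵥ (β - βhat))) := by
        rw [hJ, Matrix.smul_mulVec, dotProduct_smul, smul_eq_mul]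
      have e2 : (β - βhat) ⬝ᵥ ((Xᵀ * X) *ᵥ (β - βhat))
          = (X *ᵥ (βhat - β)) ⬝ᵥ (X *ᵥ (βhat - β)) := by
        rw [show β - βhat = -(βhat - β) by abel, Matrix.mulVec_neg, dotProduct_neg,
          neg_dotProduct, neg_neg, ← Matrix.mulVec_mulVec, Matrix.dotProduct_mulVec,
          ← Matrix.mulVec_transpose, Matrix.transpose_transpose]
      rw [e1, e2]; field_simp
    rw [h1]
    rw [add_dotProduct, dotProduct_add, dotProduct_add,
      dotProduct_comm (X *ᵥ (βhat - β)) (y - yhat), hcross, hquad]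
    ring
  -- pointwise form of the integrand
  have hpoint : ∀ β : Fin m → ℝ, exp (L β) * prior β
      = (exp (-((n : ℝ) / 2) * Real.log (2 * π * σ ^ 2)) * exp (-(1 / (2 * σ ^ 2)) * s) * Z⁻¹)
        * exp (-(1/2) * ((β - βhat) ⬝ᵥ A *ᵥ (β - βhat))) := by
    intro β
    rw [hL, hprior, hdecomp β]
    have hqA : (β - βhat) ⬝ᵥ A *ᵥ (β - βhat)
        = (((n:ℝ)+1)/n) * ((β - βhat) ⬝ᵥ (J *ᵥ (β - βhat))) := by
      rw [hAdef, Matrix.smul_mulVec, dotProduct_smul, smul_eq_mul]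
    have h1 : ∀ u v : ℝ, exp u * (Z⁻¹ * exp v) = Z⁻¹ * exp (u + v) := fun u v => by
      rw [Real.exp_add]; ring
    have h2 : ∀ u v w : ℝ, (exp u * exp v * Z⁻¹) * exp w = Z⁻¹ * exp (u + v + w) :=
      fun u v w => by rw [Real.exp_add, Real.exp_add]; ring
    rw [hqA, h1, h2]
    congr 1
    field_simp
    ring
  -- compute the integral
  have hInt : (∫ β : Fin m → ℝ, exp (L β) * prior β)
      = (exp (-((n : ℝ) / 2) * Real.log (2 * π * σ ^ 2)) * exp (-(1 / (2 * σ ^ 2)) * s) * Z⁻¹)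
        * Real.sqrt ((2*π)^m / A.det) := by
    simp_rw [hpoint]
    rw [MeasureTheory.integral_const_mul]
    congr 1
    rw [show (∫ β : Fin m → ℝ, exp (-(1/2) * ((β - βhat) ⬝ᵥ A *ᵥ (β - βhat))))
        = ∫ x : Fin m → ℝ, exp (-(1/2) * (x ⬝ᵥ A *ᵥ x)) from
      MeasureTheory.integral_sub_right_eq_self (fun x => exp (-(1/2) * (x ⬝ᵥ A *ᵥ x))) βhat]
    exact gauss_matrix A hApd
  have hπ : (0:ℝ) < π := Real.pi_pos
  have harg : ((2*π)^m / A.det) / ((2 * π) ^ m * ((n : ℝ) • J⁻¹).det) = (((n:ℝ)+1)⁻¹)^m := by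
    rw [hdetA, hdetnJ]
    have hn1 : ((n:ℝ)+1) ≠ 0 := by positivity
    field_simp
    have : ((n:ℝ) + 1) / n * n * (1 / ((n:ℝ) + 1)) = 1 := by
      field_simp
    rw [← mul_pow, ← mul_pow, this, one_pow]
  have hZG : Z⁻¹ * Real.sqrt ((2*π)^m / A.det)
      = exp (-((m:ℝ)/2) * Real.log ((n:ℝ)+1)) := by
    rw [inv_mul_eq_div, hZdef,
      ← Real.sqrt_div (div_nonneg (by positivity) hApd.det_pos.le), harg]
    rw [Real.sqrt_eq_rpow, ← Real.rpow_natCast (((n:ℝ)+1)⁻¹) m,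
      ← Real.rpow_mul (by positivity)]
    rw [Real.rpow_def_of_pos (by positivity), Real.log_inv]
    congr 1
    ring
  rw [hInt, show (exp (-((n : ℝ) / 2) * Real.log (2 * π * σ ^ 2)) * exp (-(1 / (2 * σ ^ 2)) * s)
      * Z⁻¹) * Real.sqrt ((2*π)^m / A.det)
    = exp (-((n : ℝ) / 2) * Real.log (2 * π * σ ^ 2)) * exp (-(1 / (2 * σ ^ 2)) * s)
      * (Z⁻¹ * Real.sqrt ((2*π)^m / A.det)) by ring, hZG,
    ← Real.exp_add, ← Real.exp_add, Real.log_exp]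
  ring
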